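/- The universal enveloping algebra of the |·|-twisted current algebra (𝔫[u] with the bracket [x u^p, y u^q] = (|a|^p |b|^q / |a+b|^{p+q}) [x,y] u^{p+q}) is isomorphic, as an associative unital ℚ-algebra, to the universal enveloping algebra of the untwisted current algebra (𝔫[u] with the bracket [x u^p, y u^q] = [x,y] u^{p+q}). -/

import Mathlib

/-- The structure constant `|a|^p * |b|^q / |a+b|^(p+q)` of the `|·|`-twisted
current bracket. -/
noncomputable def twistCoeff {M : Type*} [AddCommMonoid M] (absM : M →+ ℤ)
    (a b : M) (p q : ℕ) : ℚ :=
  ((absM a : ℚ) ^ p * (absM b : ℚ) ^ q) / ((absM (a + b) : ℚ) ^ (p + q))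

attribute [local instance 100] LieRing.ofAssociativeRing

/-- The universal enveloping algebra of the `|·|`-twisted
current algebra (a Lie algebra `L₁` over `ℚ` identified, via a linear
equivalence `e₁` with `𝔫[u] = ℕ →₀ 𝔫`, with the bracket
`⁅x u^p, y u^q⁆ = (|a|^p |b|^q / |a+b|^(p+q)) ⁅x,y⁆ u^(p+q)`) is isomorphic,
as an associative unital `ℚ`-algebra, to the universal enveloping algebra of
the untwisted current algebra (a Lie algebra `L₀` identified via `e₀` with
`𝔫[u]` with the bracket `⁅x u^p, y u^q⁆ = ⁅x,y⁆ u^(p+q)`). -/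
theorem enveloping_algebra_of_twisted_iso_untwisted
    {M : Type*} [AddCommMonoid M] [DecidableEq M]
    {L : Type*} [LieRing L] [LieAlgebra ℚ L]
    (𝒢 : M → Submodule ℚ L)
    (hInternal : DirectSum.IsInternal 𝒢)
    (hzero : 𝒢 0 = ⊥)
    (hbracket : ∀ (a b : M) (x y : L), x ∈ 𝒢 a → y ∈ 𝒢 b → ⁅x, y⁆ ∈ 𝒢 (a + b))
    (absM : M →+ ℤ)
    (habs : ∀ a : M, a ≠ 0 → 0 < absM a)
    (B₀ : (ℕ →₀ L) →ₗ[ℚ] (ℕ →₀ L) →ₗ[ℚ] (ℕ →₀ L))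
    (hB₀ : ∀ (a b : M) (x y : L), x ∈ 𝒢 a → y ∈ 𝒢 b → ∀ p q : ℕ,
      B₀ (Finsupp.single p x) (Finsupp.single q y)
        = Finsupp.single (p + q) ⁅x, y⁆)
    (B₁ : (ℕ →₀ L) →ₗ[ℚ] (ℕ →₀ L) →ₗ[ℚ] (ℕ →₀ L))
    (hB₁ : ∀ (a b : M) (x y : L), x ∈ 𝒢 a → y ∈ 𝒢 b → ∀ p q : ℕ,
      B₁ (Finsupp.single p x) (Finsupp.single q y)
        = Finsupp.single (p + q) (twistCoeff absM a b p q • ⁅x, y⁆))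
    {L₀ : Type*} [LieRing L₀] [LieAlgebra ℚ L₀]
    {L₁ : Type*} [LieRing L₁] [LieAlgebra ℚ L₁]
    (e₀ : L₀ ≃ₗ[ℚ] (ℕ →₀ L)) (e₁ : L₁ ≃ₗ[ℚ] (ℕ →₀ L))
    (he₀ : ∀ x y : L₀, e₀ ⁅x, y⁆ = B₀ (e₀ x) (e₀ y))
    (he₁ : ∀ x y : L₁, e₁ ⁅x, y⁆ = B₁ (e₁ x) (e₁ y)) :
    Nonempty ((UniversalEnvelopingAlgebra ℚ L₁) ≃ₐ[ℚ]
      (UniversalEnvelopingAlgebra ℚ L₀)) := by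
  classical
  -- the scaling constants
  set c : M → ℕ → ℚ := fun a p => if a = 0 then 1 else ((absM a : ℤ) : ℚ) ^ p with hc
  have hc_ne : ∀ a p, c a p ≠ 0 := by
    intro a p
    by_cases ha : a = 0
    · simp [hc, ha]
    · have : (0 : ℤ) < absM a := habs a ha
      simp only [hc, ha, if_false]
      positivity
  -- the decomposition equivalence
  let decomp : (DirectSum M fun a => 𝒢 a) ≃ₗ[ℚ] L :=
    LinearEquiv.ofBijective (DirectSum.coeLinearMap 𝒢) hInternal
  have hdecomp : ∀ (a : M) (v : 𝒢 a),
      decomp (DirectSum.of (fun a => 𝒢 a) a v) = (v : L) := by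
    intro a v
    exact DirectSum.coeLinearMap_of 𝒢 a v
  -- the diagonal scaling equivalence in each `u`-degree
  let τ : ℕ → (L ≃ₗ[ℚ] L) := fun p =>
    decomp.symm ≪≫ₗ
      (DFinsupp.mapRange.linearEquiv fun a =>
        LinearEquiv.smulOfNeZero ℚ (𝒢 a) (c a p) (hc_ne a p)) ≪≫ₗ decomp
  have hτ : ∀ (p : ℕ) (a : M) (x : L), x ∈ 𝒢 a → τ p x = c a p • x := by
    intro p a x hx
    have h1 : decomp.symm x = DirectSum.of (fun a => 𝒢 a) a ⟨x, hx⟩ := by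
      rw [LinearEquiv.symm_apply_eq, hdecomp]
    simp only [τ, LinearEquiv.trans_apply, h1]
    have h2 : (DFinsupp.mapRange.linearEquiv fun a =>
        LinearEquiv.smulOfNeZero ℚ (𝒢 a) (c a p) (hc_ne a p))
          (DirectSum.of (fun a => 𝒢 a) a ⟨x, hx⟩)
        = DirectSum.of (fun a => 𝒢 a) a (c a p • ⟨x, hx⟩) := by
      simp only [DFinsupp.mapRange.linearEquiv_apply]
      exact DFinsupp.mapRange_single
    exact (congrArg decomp h2).trans (hdecomp a _)
  -- the global rescaling map
  let T : (ℕ →₀ L) ≃ₗ[ℚ] (ℕ →₀ L) :=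
    finsuppLEquivDirectSum ℚ L ℕ ≪≫ₗ
      DFinsupp.mapRange.linearEquiv (fun p => τ p) ≪≫ₗ
      (finsuppLEquivDirectSum ℚ L ℕ).symm
  have hT : ∀ (p : ℕ) (x : L), T (Finsupp.single p x) = Finsupp.single p (τ p x) := by
    intro p x
    simp only [T, LinearEquiv.trans_apply, finsuppLEquivDirectSum_single]
    have h2 : (DFinsupp.mapRange.linearEquiv fun p => τ p)
        (DirectSum.lof ℚ ℕ (fun _ => L) p x)
        = DirectSum.lof ℚ ℕ (fun _ => L) p (τ p x) := by
      simp only [DFinsupp.mapRange.linearEquiv_apply]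
      exact DFinsupp.mapRange_single
    exact (congrArg (finsuppLEquivDirectSum ℚ L ℕ).symm h2).trans
      (finsuppLEquivDirectSum_symm_lof ℚ L ℕ p (τ p x))
  -- the key compatibility for homogeneous single elements
  have key1h : ∀ (p q : ℕ) (a b : M) (x y : L), x ∈ 𝒢 a → y ∈ 𝒢 b →
      T (B₁ (Finsupp.single p x) (Finsupp.single q y))
        = B₀ (T (Finsupp.single p x)) (T (Finsupp.single q y)) := by
    intro p q a b x y hx hy
    by_cases ha : a = 0
    · have : x = 0 := by
        have := hx; rw [ha, hzero] at this; simpa using this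
      simp [this]
    by_cases hb : b = 0
    · have : y = 0 := by
        have := hy; rw [hb, hzero] at this; simpa using this
      simp [this]
    have hxy : ⁅x, y⁆ ∈ 𝒢 (a + b) := hbracket a b x y hx hy
    rw [hB₁ a b x y hx hy p q, hT, hT, hT, hτ p a x hx, hτ q b y hy,
      LinearEquiv.map_smul, hτ (p + q) (a + b) ⁅x, y⁆ hxy]
    have hx' : c a p • x ∈ 𝒢 a := Submodule.smul_mem _ _ hx
    have hy' : c b q • y ∈ 𝒢 b := Submodule.smul_mem _ _ hy
    rw [hB₀ a b _ _ hx' hy' p q, smul_lie, lie_smul]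
    by_cases hab : a + b = 0
    · have : ⁅x, y⁆ = 0 := by
        have := hxy; rw [hab, hzero] at this; simpa using this
      simp [this]
    · have habs' : ((absM (a + b) : ℤ) : ℚ) ≠ 0 := by
        have : (0 : ℤ) < absM (a + b) := habs _ hab
        exact_mod_cast this.ne'
      rw [smul_smul, smul_smul]
      have hsc : twistCoeff absM a b p q * c (a + b) (p + q) = c a p * c b q := by
        simp only [hc, ha, hb, hab, if_false]
        rw [twistCoeff, div_mul_cancel₀]
        exact pow_ne_zero _ habs'
      rw [hsc]
  -- extend to all of `L` by linearity
  have key1 : ∀ (p q : ℕ) (x y : L),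
      T (B₁ (Finsupp.single p x) (Finsupp.single q y))
        = B₀ (T (Finsupp.single p x)) (T (Finsupp.single q y)) := by
    intro p q x y
    have hx : x ∈ ⨆ a, 𝒢 a := by
      rw [hInternal.submodule_iSup_eq_top]; trivial
    revert y
    refine Submodule.iSup_induction (motive := fun x => ∀ y : L,
      T (B₁ (Finsupp.single p x) (Finsupp.single q y))
        = B₀ (T (Finsupp.single p x)) (T (Finsupp.single q y))) 𝒢 hx ?_ ?_ ?_
    · intro a x hx y
      have hy : y ∈ ⨆ b, 𝒢 b := by
        rw [hInternal.submodule_iSup_eq_top]; trivial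
      refine Submodule.iSup_induction (motive := fun y =>
        T (B₁ (Finsupp.single p x) (Finsupp.single q y))
          = B₀ (T (Finsupp.single p x)) (T (Finsupp.single q y))) 𝒢 hy
        (fun b y hy => key1h p q a b x y hx hy) (by simp) ?_
      intro y z hy hz
      simp only [Finsupp.single_add, map_add, LinearMap.add_apply, hy, hz]
    · intro y; simp
    · intro x z hx hz y
      simp only [Finsupp.single_add, map_add, LinearMap.add_apply, hx y, hz y]
  -- upgrade to all elements of `ℕ →₀ L`
  have key : ∀ u v : (ℕ →₀ L), T (B₁ u v) = B₀ (T u) (T v) := by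
    have : B₁.compr₂ (T : (ℕ →₀ L) →ₗ[ℚ] (ℕ →₀ L))
        = (B₀.comp (T : (ℕ →₀ L) →ₗ[ℚ] (ℕ →₀ L))).compl₂
            (T : (ℕ →₀ L) →ₗ[ℚ] (ℕ →₀ L)) := by
      apply Finsupp.lhom_ext
      intro p x
      apply Finsupp.lhom_ext
      intro q y
      simpa using key1 p q x y
    intro u v
    simpa using LinearMap.congr_fun (LinearMap.congr_fun this u) v
  -- the Lie algebra isomorphism `L₁ ≃ L₀`
  let E : L₁ ≃ₗ[ℚ] L₀ := e₁ ≪≫ₗ T ≪≫ₗ e₀.symm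
  have hE : ∀ x y : L₁, E ⁅x, y⁆ = ⁅E x, E y⁆ := by
    intro x y
    apply e₀.injective
    rw [he₀]
    simp only [E, LinearEquiv.trans_apply, LinearEquiv.apply_symm_apply]
    rw [he₁]
    exact key (e₁ x) (e₁ y)
  have hE' : ∀ x y : L₀, E.symm ⁅x, y⁆ = ⁅E.symm x, E.symm y⁆ := by
    intro x y
    apply E.injective
    rw [hE, LinearEquiv.apply_symm_apply, LinearEquiv.apply_symm_apply,
      LinearEquiv.apply_symm_apply]
  let f : L₁ →ₗ⁅ℚ⁆ L₀ := { E.toLinearMap with map_lie' := fun {x y} => hE x y }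
  let g : L₀ →ₗ⁅ℚ⁆ L₁ := { E.symm.toLinearMap with map_lie' := fun {x y} => hE' x y }
  refine ⟨AlgEquiv.ofAlgHom
    (UniversalEnvelopingAlgebra.lift ℚ ((UniversalEnvelopingAlgebra.ι ℚ).comp f))
    (UniversalEnvelopingAlgebra.lift ℚ ((UniversalEnvelopingAlgebra.ι ℚ).comp g))
    ?_ ?_⟩
  · ext x
    show (UniversalEnvelopingAlgebra.lift ℚ ((UniversalEnvelopingAlgebra.ι ℚ).comp f))
        ((UniversalEnvelopingAlgebra.lift ℚ ((UniversalEnvelopingAlgebra.ι ℚ).comp g))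
          ((UniversalEnvelopingAlgebra.ι ℚ) x))
      = (UniversalEnvelopingAlgebra.ι ℚ) x
    rw [UniversalEnvelopingAlgebra.lift_ι_apply, LieHom.comp_apply,
      UniversalEnvelopingAlgebra.lift_ι_apply, LieHom.comp_apply]
    exact congrArg (UniversalEnvelopingAlgebra.ι ℚ)
      (show f (g x) = x from E.apply_symm_apply x)
  · ext x
    show (UniversalEnvelopingAlgebra.lift ℚ ((UniversalEnvelopingAlgebra.ι ℚ).comp g))
        ((UniversalEnvelopingAlgebra.lift ℚ ((UniversalEnvelopingAlgebra.ι ℚ).comp f))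
          ((UniversalEnvelopingAlgebra.ι ℚ) x))
      = (UniversalEnvelopingAlgebra.ι ℚ) x
    rw [UniversalEnvelopingAlgebra.lift_ι_apply, LieHom.comp_apply,
      UniversalEnvelopingAlgebra.lift_ι_apply, LieHom.comp_apply]
    exact congrArg (UniversalEnvelopingAlgebra.ι ℚ)
      (show g (f x) = x from E.symm_apply_apply x)
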